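/- Let K = ℚ(m) be the field of rational functions in one variable m over ℚ, and let W be the Weierstrass curve over the polynomial ring K[t] given by y² = x³ + (t² + 3t + 3m)x² + ((3m − 1)t + 3m²)x + m³ (i.e. a₁ = 0, a₂ = t² + 3t + 3m, a₃ = 0, a₄ = (3m−1)t + 3m², a₆ = m³). Then there exists a nonzero constant c ∈ K such that the discriminant of W, as a polynomial in t, satisfies Δ = c · t² · ((m−1)t − 1)² · ((4m − 1)t² + (18m − 4)t + 27m²), and moreover t divides the invariant c₄ of W in K[t]. -/

import Mathlib

open Polynomial

/-- The family of rational elliptic surfaces with configuration [1,1,2,6,II]: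
`y² = x³ + (t² + 3t + 3m)x² + ((3m−1)t + 3m²)x + m³` over `ℚ(m)[t]`.  Its discriminant is,
up to a nonzero constant, `t² · ((m−1)t − 1)²` times the displayed quadratic in `t`, and
`t` divides `c₄`. -/
theorem stmt_1 :
    let K := RatFunc ℚ
    let m : Polynomial K := Polynomial.C RatFunc.X
    let t : Polynomial K := Polynomial.X
    let W : WeierstrassCurve (Polynomial K) :=
      { a₁ := 0
        a₂ := t ^ 2 + 3 * t + 3 * m
        a₃ := 0
        a₄ := (3 * m - 1) * t + 3 * m ^ 2
        a₆ := m ^ 3 }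
    (∃ c : K, c ≠ 0 ∧
      W.Δ = Polynomial.C c * t ^ 2 * ((m - 1) * t - 1) ^ 2 *
        ((4 * m - 1) * t ^ 2 + (18 * m - 4) * t + 27 * m ^ 2)) ∧
    t ∣ W.c₄ := by
  intro K m t W
  haveI : CharZero K := charZero_of_injective_algebraMap (algebraMap ℚ (RatFunc ℚ)).injective
  constructor
  · refine ⟨-16, neg_ne_zero.mpr (OfNat.ofNat_ne_zero _), ?_⟩
    show W.Δ = _
    simp only [WeierstrassCurve.Δ, WeierstrassCurve.b₂, WeierstrassCurve.b₄,
      WeierstrassCurve.b₆, WeierstrassCurve.b₈, W, map_neg, map_ofNat, Polynomial.C_neg, Polynomial.C_ofNat]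
    ring
  · refine ⟨48 + 144 * t + 96 * t ^ 2 + 16 * t ^ 3 + 144 * m + 96 * m * t, ?_⟩
    show W.c₄ = _
    simp only [WeierstrassCurve.c₄, WeierstrassCurve.b₂, WeierstrassCurve.b₄, W]
    ring
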